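/- Let S be a nonempty set, H_ℂ a complex Hilbert space whose inner product ⟪·,·⟫ is linear in the first argument, and Φ : S → H_ℂ; define k₀(s,s₀) := ⟪Φ s₀, Φ s⟫. Regard H_ℂ as a real Hilbert space with inner product (f,g) ↦ Re ⟪f,g⟫, and set Φ_re s := Φ s and Φ_im s := i·Φ s. Then: (a) for every f ∈ H_ℂ and s ∈ S, Re ⟪f, Φ_re s⟫ + i·Re ⟪f, Φ_im s⟫ = ⟪f, Φ s⟫, i.e., Φ_re s and Φ_im s represent the real and imaginary parts of the evaluation f ↦ ⟪f, Φ s⟫ with respect to the real inner product; (b) the resulting complex kernel k(s,s₀) := (ev (Φ_re s₀) s) − i·(ev (Φ_im s₀) s) equals 2·k₀(s,s₀), and the resulting pseudo-kernel c(s,s₀) := (ev (Φ_re s₀) s) + i·(ev (Φ_im s₀) s) equals 0, where ev f s := Re ⟪f, Φ_re s⟫ + i·Re ⟪f, Φ_im s⟫. -/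

import Mathlib

/-- **Forgetting the complex structure of a complex RKHS yields the circular
complex/real RKHS with complex kernel `2k₀` and vanishing pseudo-kernel.**
The paper's inner product `⟪a, b⟫` is linear in the first argument, i.e. equals
Mathlib's `inner b a`; thus `k₀(s,s₀) = ⟪Φ s₀, Φ s⟫ = inner (Φ s) (Φ s₀)` and the
evaluation `f ↦ ⟪f, Φ s⟫` is `inner (Φ s) f`.  With `Φre s = Φ s`, `Φim s = i Φ s`,
and `ev f s = Re ⟪f, Φre s⟫ + i Re ⟪f, Φim s⟫`: (a) `ev f s = ⟪f, Φ s⟫`;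
(b) the complex kernel `ev (Φre s₀) s − i · ev (Φim s₀) s` equals `2 k₀(s,s₀)` and the
pseudo-kernel `ev (Φre s₀) s + i · ev (Φim s₀) s` equals `0`. -/
theorem stmt17 {S : Type*} [Nonempty S] {Hc : Type*} [NormedAddCommGroup Hc]
    [InnerProductSpace ℂ Hc] (Φ : S → Hc)
    (k₀ : S → S → ℂ) (hk₀ : ∀ s s₀, k₀ s s₀ = inner ℂ (Φ s) (Φ s₀))
    (Φre Φim : S → Hc) (hre : ∀ s, Φre s = Φ s) (him : ∀ s, Φim s = Complex.I • Φ s)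
    (ev : Hc → S → ℂ)
    (hev : ∀ f s, ev f s =
      (((inner ℂ (Φre s) f : ℂ).re : ℂ) + ((inner ℂ (Φim s) f : ℂ).re : ℂ) * Complex.I)) :
    (∀ (f : Hc) (s : S), ev f s = inner ℂ (Φ s) f) ∧
    (∀ s s₀ : S, ev (Φre s₀) s - Complex.I * ev (Φim s₀) s = 2 * k₀ s s₀) ∧
    (∀ s s₀ : S, ev (Φre s₀) s + Complex.I * ev (Φim s₀) s = 0) := by
  have key : ∀ (f : Hc) (s : S), ev f s = inner ℂ (Φ s) f := by
    intro f s
    rw [hev, hre, him, inner_smul_left]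
    simp [Complex.ext_iff]
  refine ⟨key, ?_, ?_⟩
  · intro s s₀
    rw [key, key, hre, him, inner_smul_right, hk₀]
    ring_nf
    simp [Complex.I_sq]
    ring
  · intro s s₀
    rw [key, key, hre, him, inner_smul_right]
    ring_nf
    simp [Complex.I_sq]
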